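/- Let r > 1 be a real number and let b_n := ((−1)^n / n!) · ∏_{k=1}^{n} (r − k) be the n-th Taylor coefficient of the function x ↦ (1 − x)^{r−1} at 0. Then for every natural number N, ∑_{n=0}^{N} |b_n| ≤ 2^(⌊r⌋ + 1), where ⌊r⌋ denotes the integer part of r; equivalently, ∑_{n=0}^{N} (1/n!) · ∏_{k=1}^{n} |r − k| ≤ 2^(⌊r⌋ + 1). -/

import Mathlib

open Finset

private lemma icc_prod (f : ℕ → ℝ) (n : ℕ) :
    ∏ k ∈ Icc 1 n, f k = ∏ i ∈ range n, f (i + 1) := by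
  rw [← Finset.Ico_add_one_right_eq_Icc, Finset.prod_Ico_eq_prod_range]
  simp [add_comm]

private noncomputable def AA (r : ℝ) (n : ℕ) : ℝ :=
  (1 / n.factorial) * ∏ k ∈ Icc 1 n, |r - k|

private lemma AA_nonneg (r : ℝ) (n : ℕ) : 0 ≤ AA r n := by
  unfold AA
  apply mul_nonneg (by positivity)
  exact Finset.prod_nonneg fun k _ => abs_nonneg _

private lemma AA_zero (r : ℝ) : AA r 0 = 1 := by simp [AA]

private lemma base_eq (r : ℝ) (h1 : 1 < r) (h2 : r ≤ 2) (N : ℕ) :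
    ∑ n ∈ range (N + 1), AA r n = 2 - ∏ i ∈ range N, ((i + 2 - r) / (i + 1)) := by
  induction N with
  | zero => simp [AA_zero]; norm_num
  | succ N ih =>
      rw [Finset.sum_range_succ, ih, Finset.prod_range_succ]
      have hA : AA r (N + 1)
          = (1 / (N + 1).factorial) * ((∏ i ∈ range N, (i + 2 - r)) * (r - 1)) := by
        unfold AA
        rw [icc_prod, Finset.prod_range_succ']
        congr 1
        congr 1
        · refine Finset.prod_congr rfl fun i _ => ?_
          have hi : (0:ℝ) ≤ (i:ℝ) := Nat.cast_nonneg i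
          rw [abs_of_nonpos (by push_cast; linarith)]
          push_cast; ring
        · rw [abs_of_nonneg (by push_cast; linarith)]
          push_cast; ring
      have hQ : (∏ i ∈ range N, ((i + 2 - r) / (i + 1) : ℝ))
          = (∏ i ∈ range N, ((i : ℝ) + 2 - r)) / (N.factorial : ℝ) := by
        rw [Finset.prod_div_distrib]
        congr 1
        exact_mod_cast congrArg (Nat.cast : ℕ → ℝ)
          (Finset.prod_range_add_one_eq_factorial N)
      rw [hA, hQ]
      have hf : ((N + 1).factorial : ℝ) = ((N : ℝ) + 1) * N.factorial := by
        rw [Nat.factorial_succ]; push_cast; ring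
      have hf0 : (N.factorial : ℝ) ≠ 0 := by positivity
      have hN1 : ((N : ℝ) + 1) ≠ 0 := by positivity
      rw [hf]
      field_simp
      ring

private lemma base_le (r : ℝ) (h1 : 1 < r) (h2 : r ≤ 2) (N : ℕ) :
    ∑ n ∈ range (N + 1), AA r n ≤ 2 := by
  rw [base_eq r h1 h2 N]
  have : (0:ℝ) ≤ ∏ i ∈ range N, ((i + 2 - r) / (i + 1)) := by
    apply Finset.prod_nonneg
    intro i _
    have hi : (0:ℝ) ≤ (i:ℝ) := Nat.cast_nonneg i
    apply div_nonneg (by linarith) (by linarith)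
  linarith

private lemma key_id (r : ℝ) (n : ℕ) :
    ∏ k ∈ Icc 1 (n + 1), (r - k)
      = ∏ k ∈ Icc 1 (n + 1), (r - 1 - k) + ((n : ℝ) + 1) * ∏ k ∈ Icc 1 n, (r - 1 - k) := by
  rw [icc_prod (fun k => (r - k)), icc_prod (fun k => (r - 1 - k)),
    icc_prod (fun k => (r - 1 - k)) n, Finset.prod_range_succ', Finset.prod_range_succ]
  have h : ∀ i ∈ range n, (r - ((i + 1 + 1 : ℕ) : ℝ)) = (r - 1 - ((i + 1 : ℕ) : ℝ)) := by
    intro i _; push_cast; ring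
  rw [Finset.prod_congr rfl h]
  set P := ∏ i ∈ range n, (r - 1 - ((i + 1 : ℕ) : ℝ)) with hP
  push_cast
  ring

private lemma myDivHelper (c d P2 P3 : ℝ) (hc : 0 < c) (hd : 0 < d) :
    1 / (c * d) * |P2 + c * P3| ≤ 1 / (c * d) * |P2| + 1 / d * |P3| := by
  have habs : |P2 + c * P3| ≤ |P2| + c * |P3| := by
    calc |P2 + c * P3| ≤ |P2| + |c * P3| := abs_add_le _ _
      _ = _ := by rw [abs_mul, abs_of_pos hc]
  calc 1 / (c * d) * |P2 + c * P3|
      ≤ 1 / (c * d) * (|P2| + c * |P3|) :=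
        mul_le_mul_of_nonneg_left habs (by positivity)
    _ = 1 / (c * d) * |P2| + 1 / d * |P3| := by field_simp

private lemma AA_step (r : ℝ) (n : ℕ) :
    AA r (n + 1) ≤ AA (r - 1) (n + 1) + AA (r - 1) n := by
  have hf : ((n + 1).factorial : ℝ) = ((n : ℝ) + 1) * n.factorial := by
    rw [Nat.factorial_succ]; push_cast; ring
  have hf0 : (0:ℝ) < (n.factorial : ℝ) := by positivity
  have hN1 : (0:ℝ) < (n : ℝ) + 1 := by positivity
  unfold AA
  simp only [← Finset.abs_prod]
  rw [key_id, hf]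
  exact myDivHelper _ _ _ _ hN1 hf0

private lemma sum_step (r : ℝ) (N : ℕ) :
    ∑ n ∈ range (N + 1), AA r n ≤ 2 * ∑ n ∈ range (N + 1), AA (r - 1) n := by
  rw [Finset.sum_range_succ' (AA r), Finset.sum_range_succ' (AA (r - 1))]
  have h1 : ∑ i ∈ range N, AA r (i + 1) ≤
      ∑ i ∈ range N, (AA (r - 1) (i + 1) + AA (r - 1) i) :=
    Finset.sum_le_sum fun i _ => AA_step r i
  rw [Finset.sum_add_distrib] at h1
  have h2 : ∑ i ∈ range N, AA (r - 1) i ≤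
      ∑ i ∈ range N, AA (r - 1) (i + 1) + AA (r - 1) 0 := by
    rw [← Finset.sum_range_succ' (AA (r - 1))]
    exact Finset.sum_le_sum_of_subset_of_nonneg (by simp [Finset.range_subset]; intro x hx; omega)
      (fun i _ _ => AA_nonneg _ i)
  have h3 := AA_zero (r - 1)
  have h4 := AA_zero r
  linarith

private lemma main_ind : ∀ m : ℕ, ∀ r : ℝ, 1 < r → r ≤ m + 2 →
    ∀ N, ∑ n ∈ range (N + 1), AA r n ≤ 2 ^ (m + 1) := by
  intro m
  induction m with
  | zero => intro r h1 h2 N; simpa using base_le r h1 (by exact_mod_cast h2) N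
  | succ m ih =>
      intro r h1 h2 N
      by_cases hc : r ≤ 2
      · calc ∑ n ∈ range (N + 1), AA r n ≤ 2 := base_le r h1 hc N
          _ ≤ 2 ^ (m + 1 + 1) := by
              calc (2:ℝ) = 2 ^ 1 := (pow_one 2).symm
                _ ≤ 2 ^ (m + 1 + 1) := by
                    apply pow_le_pow_right₀ (by norm_num); omega
      · push_neg at hc
        have hr1 : 1 < r - 1 := by linarith
        have hr2 : r - 1 ≤ m + 2 := by push_cast at h2 ⊢; linarith
        calc ∑ n ∈ range (N + 1), AA r n ≤ 2 * ∑ n ∈ range (N + 1), AA (r - 1) n :=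
              sum_step r N
          _ ≤ 2 * 2 ^ (m + 1) := by linarith [ih (r - 1) hr1 hr2 N]
          _ = 2 ^ (m + 1 + 1) := by ring

theorem sum_abs_binomial_coeff_le (r : ℝ) (hr : 1 < r)
    (b : ℕ → ℝ)
    (hb : ∀ n, b n = ((-1 : ℝ) ^ n / n.factorial) * ∏ k ∈ Icc 1 n, (r - k))
    (N : ℕ) :
    (∑ n ∈ range (N + 1), |b n| ≤ 2 ^ (⌊r⌋ + 1)) ∧
      (∑ n ∈ range (N + 1), (1 / (n.factorial : ℝ)) * ∏ k ∈ Icc 1 n, |r - k|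
        ≤ 2 ^ (⌊r⌋ + 1)) := by
  have hfloor : (1 : ℤ) ≤ ⌊r⌋ := Int.le_floor.2 (by exact_mod_cast hr.le)
  set m : ℕ := (⌊r⌋ - 1).toNat with hm
  have hm2 : ((m : ℝ) + 2) = (⌊r⌋ : ℝ) + 1 := by
    have : ((m : ℤ) : ℝ) = ((⌊r⌋ - 1 : ℤ) : ℝ) := by
      norm_cast
      omega
    push_cast at this ⊢
    linarith
  have hrle : r ≤ (m : ℝ) + 2 := by
    rw [hm2]; exact (Int.lt_floor_add_one r).le
  have hmain := main_ind m r hr hrle N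
  have hpow : (2 : ℝ) ^ (m + 1) ≤ 2 ^ (⌊r⌋ + 1) := by
    have h1 : (2 : ℝ) ^ (⌊r⌋ + 1) = 2 ^ ((⌊r⌋ + 1).toNat) := by
      rw [← zpow_natCast]
      congr 1
      omega
    rw [h1]
    apply pow_le_pow_right₀ (by norm_num)
    omega
  have hAA : ∑ n ∈ range (N + 1), AA r n ≤ 2 ^ (⌊r⌋ + 1) := le_trans hmain hpow
  have heq2 : ∑ n ∈ range (N + 1), (1 / (n.factorial : ℝ)) * ∏ k ∈ Icc 1 n, |r - k|
      = ∑ n ∈ range (N + 1), AA r n := rfl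
  have heq1 : ∀ n, |b n| = AA r n := by
    intro n
    rw [hb n, abs_mul, abs_div, abs_pow, abs_neg, abs_one, one_pow, Finset.abs_prod]
    unfold AA
    congr 1
    rw [Nat.abs_cast]
  constructor
  · have h5 : ∑ n ∈ range (N + 1), |b n| = ∑ n ∈ range (N + 1), AA r n :=
      Finset.sum_congr rfl fun n _ => heq1 n
    rw [h5]; exact hAA
  · rw [heq2]; exact hAA
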